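/- Let ℓ_a, ℓ_b > 0 and real-valued f_a ∈ L²(0,ℓ_a), f_b ∈ L²(0,ℓ_b) be given, and assume the half-traces x_{f_a}(E), x_{f_b}(E), x_{f_ab}(E) are well defined for every E ∈ ℝ. Then the Fricke–Vogt invariant along the curve of initial conditions tends to zero at high energy: lim_{E → +∞} I(E) = 0. -/

import Mathlib

open MeasureTheory Set Filter
open scoped ENNReal

noncomputable section

/-- `IsSolution ℓ E f y y'` : `y` is a solution of `-y'' + f·y = E·y` on `[0,ℓ]`:
`y` is differentiable with continuous derivative `y'` on `[0,ℓ]`, and `y'` is absolutely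
continuous with a.e. derivative `(f - E)·y` (encoded in integrated form). -/
def IsSolution (ℓ E : ℝ) (f y y' : ℝ → ℝ) : Prop :=
  (∀ x ∈ Icc (0:ℝ) ℓ, HasDerivAt y (y' x) x) ∧
  ContinuousOn y' (Icc (0:ℝ) ℓ) ∧
  (∀ x ∈ Icc (0:ℝ) ℓ, y' x = y' 0 + ∫ t in (0:ℝ)..x, (f t - E) * y t)

/-- Neumann solution: `y(0) = 1`, `y'(0) = 0`. -/
def IsNeumannSolution (ℓ E : ℝ) (f y y' : ℝ → ℝ) : Prop :=
  IsSolution ℓ E f y y' ∧ y 0 = 1 ∧ y' 0 = 0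

/-- Dirichlet solution: `y(0) = 0`, `y'(0) = 1`. -/
def IsDirichletSolution (ℓ E : ℝ) (f y y' : ℝ → ℝ) : Prop :=
  IsSolution ℓ E f y y' ∧ y 0 = 0 ∧ y' 0 = 1

/-- `v` is the half-trace `x_f(E) = (ψ_N(ℓ,E) + ψ_D'(ℓ,E))/2`. -/
def IsHalfTrace (ℓ : ℝ) (f : ℝ → ℝ) (E v : ℝ) : Prop :=
  ∃ yN yN' yD yD' : ℝ → ℝ,
    IsNeumannSolution ℓ E f yN yN' ∧ IsDirichletSolution ℓ E f yD yD' ∧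
    v = (yN ℓ + yD' ℓ) / 2

/-- The Fricke–Vogt invariant. -/
def FV (x y z : ℝ) : ℝ := x ^ 2 + y ^ 2 + z ^ 2 - 2 * x * y * z - 1

/-- The Fibonacci trace map `T(x,y,z) = (2xy - z, x, y)`. -/
def traceMap : ℝ × ℝ × ℝ → ℝ × ℝ × ℝ :=
  fun p => (2 * p.1 * p.2.1 - p.2.2, p.1, p.2.1)

/-- The set `B` of energies whose forward orbit under the trace map, starting from the
curve of initial conditions `γ`, is bounded. -/
def traceSpectrum (γ : ℝ → ℝ × ℝ × ℝ) : Set ℝ :=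
  {E | Bornology.IsBounded (Set.range fun n : ℕ => traceMap^[n] (γ E))}

/-- Local Hausdorff dimension of `F` at `E`:
`lim_{ε ↓ 0} dim_H (F ∩ (E-ε, E+ε))`, which equals the infimum by monotonicity. -/
def locDim (F : Set ℝ) (E : ℝ) : ℝ≥0∞ :=
  ⨅ (ε : ℝ) (_ : 0 < ε), dimH (F ∩ Ioo (E - ε) (E + ε))

/-- Concatenation `f_ab = (f_a | f_b)` (on `[0, ℓa + ℓb)`). -/
def concatPair (ℓa : ℝ) (fa fb : ℝ → ℝ) : ℝ → ℝ :=
  fun x => if x < ℓa then fa x else fb (x - ℓa)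

/-- Fibonacci substitution `S(a) = ab`, `S(b) = a`, with `a = true`, `b = false`. -/
def fibSub : List Bool → List Bool :=
  fun w => w.flatMap fun c => if c then [true, false] else [true]

/-- The Fibonacci word `u`, the fixed point of the substitution starting with `a`:
its `n`-th letter is the `n`-th letter of `Sᵏ(a)` for any large `k` (here `k = n+2`). -/
def fibWord (n : ℕ) : Bool := (fibSub^[n + 2] [true]).getD n true

/-- `V` is the potential on `[0,∞)` obtained by concatenating `f_{u_0} | f_{u_1} | ⋯`
along the Fibonacci word `u`. -/
def IsFibPotential (ℓa ℓb : ℝ) (fa fb V : ℝ → ℝ) : Prop :=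
  ∀ n : ℕ, ∀ x : ℝ,
    (∑ j ∈ Finset.range n, (if fibWord j then ℓa else ℓb)) ≤ x →
    x < (∑ j ∈ Finset.range (n + 1), (if fibWord j then ℓa else ℓb)) →
    V x = (if fibWord n then fa else fb) (x - ∑ j ∈ Finset.range n, (if fibWord j then ℓa else ℓb))

/-- `(f_a, f_b)` is aperiodic: the concatenated Fibonacci potential `V` has no period `p > 0`. -/
def FibAperiodic (ℓa ℓb : ℝ) (fa fb : ℝ → ℝ) : Prop :=
  ∀ V : ℝ → ℝ, IsFibPotential ℓa ℓb fa fb V → ¬ ∃ p > 0, ∀ x ≥ 0, V (x + p) = V x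

end



set_option maxHeartbeats 1000000

lemma parts_aux (h u u' : ℝ → ℝ) (x : ℝ) (hx : 0 ≤ x)
    (hh : IntegrableOn h (Ioc 0 x)) (hu : ∀ t, HasDerivAt u (u' t) t)
    (hu' : Continuous u') :
    (∫ t in (0:ℝ)..x, h t) * u x
      = (∫ t in (0:ℝ)..x, (∫ s in (0:ℝ)..t, h s) * u' t)
        + ∫ t in (0:ℝ)..x, h t * u t := by
  have hucont : Continuous u := continuous_iff_continuousAt.mpr fun t => (hu t).continuousAt
  set μ := volume.restrict (Ioc (0:ℝ) x) with hμ
  set G : ℝ × ℝ → ℝ := fun p => if p.2 ≤ p.1 then h p.2 * u' p.1 else 0 with hG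
  have hSmeas : MeasurableSet {p : ℝ × ℝ | p.2 ≤ p.1} :=
    measurableSet_le measurable_snd measurable_fst
  have hGint : Integrable G (μ.prod μ) := by
    have h1 : Integrable (fun p : ℝ × ℝ => u' p.1 * h p.2) (μ.prod μ) :=
      Integrable.mul_prod (hu'.integrableOn_Ioc) hh
    have h2 : G = Set.indicator {p : ℝ × ℝ | p.2 ≤ p.1} (fun p => u' p.1 * h p.2) := by
      funext p
      by_cases hp : p.2 ≤ p.1
      · simp [hG, hp, Set.indicator_of_mem, mul_comm]
      · simp [hG, hp]
    rw [h2]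
    exact h1.indicator hSmeas
  have swap : ∫ t, (∫ s, G (t, s) ∂μ) ∂μ = ∫ s, (∫ t, G (t, s) ∂μ) ∂μ :=
    MeasureTheory.integral_integral_swap hGint
  have hL : ∫ t, (∫ s, G (t, s) ∂μ) ∂μ = ∫ t in Ioc (0:ℝ) x, (∫ s in Ioc (0:ℝ) t, h s) * u' t := by
    rw [hμ]
    refine setIntegral_congr_fun measurableSet_Ioc fun t ht => ?_
    have hind : (fun s => G (t, s)) = Set.indicator (Iic t) (fun s => h s * u' t) := by
      funext s
      by_cases hs : s ≤ t
      · simp [hG, hs, Set.indicator_of_mem, Set.mem_Iic]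
      · simp [hG, hs, Set.mem_Iic]
    have hset : Iic t ∩ Ioc 0 x = Ioc 0 t := by
      ext s; simp only [mem_inter_iff, mem_Iic, mem_Ioc]
      exact ⟨fun ⟨h1, h2, h3⟩ => ⟨h2, h1⟩, fun ⟨h1, h2⟩ => ⟨h2, h1, h2.trans ht.2⟩⟩
    calc ∫ s, G (t, s) ∂(volume.restrict (Ioc 0 x))
        = ∫ s, Set.indicator (Iic t) (fun s => h s * u' t) s ∂(volume.restrict (Ioc 0 x)) := by
          rw [hind]
      _ = ∫ s in Iic t, h s * u' t ∂(volume.restrict (Ioc 0 x)) :=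
          integral_indicator measurableSet_Iic
      _ = ∫ s in Ioc (0:ℝ) t, h s * u' t := by
          rw [Measure.restrict_restrict measurableSet_Iic, hset]
      _ = (∫ s in Ioc (0:ℝ) t, h s) * u' t := integral_mul_const _ _
  have hR : ∫ s, (∫ t, G (t, s) ∂μ) ∂μ = ∫ s in Ioc (0:ℝ) x, h s * (u x - u s) := by
    rw [hμ]
    refine setIntegral_congr_fun measurableSet_Ioc fun s hs => ?_
    have hind : (fun t => G (t, s)) = Set.indicator (Ici s) (fun t => h s * u' t) := by
      funext t
      by_cases hts : s ≤ t
      · simp [hG, hts, Set.indicator_of_mem, Set.mem_Ici]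
      · simp [hG, hts, Set.mem_Ici]
    have hset : Ici s ∩ Ioc 0 x = Icc s x := by
      ext t; simp only [mem_inter_iff, mem_Ici, mem_Ioc, mem_Icc]
      exact ⟨fun ⟨h1, _, h3⟩ => ⟨h1, h3⟩, fun ⟨h1, h2⟩ => ⟨h1, hs.1.trans_le h1, h2⟩⟩
    have hftc : ∫ t in s..x, u' t = u x - u s :=
      intervalIntegral.integral_eq_sub_of_hasDerivAt (fun t _ => hu t)
        (hu'.intervalIntegrable s x)
    calc ∫ t, G (t, s) ∂(volume.restrict (Ioc 0 x))
        = ∫ t, Set.indicator (Ici s) (fun t => h s * u' t) t ∂(volume.restrict (Ioc 0 x)) := by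
          rw [hind]
      _ = ∫ t in Ici s, h s * u' t ∂(volume.restrict (Ioc 0 x)) :=
          integral_indicator measurableSet_Ici
      _ = ∫ t in Icc s x, h s * u' t := by
          rw [Measure.restrict_restrict measurableSet_Ici, hset]
      _ = h s * ∫ t in Icc s x, u' t := integral_const_mul _ _
      _ = h s * (u x - u s) := by
          rw [integral_Icc_eq_integral_Ioc, ← intervalIntegral.integral_of_le hs.2, hftc]
  -- integrabilities
  have hhu : IntegrableOn (fun s => h s * u s) (Ioc 0 x) := by
    have : IntegrableOn h (Icc 0 x) := (integrableOn_Icc_iff_integrableOn_Ioc).mpr hh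
    exact (integrableOn_Icc_iff_integrableOn_Ioc).mp
      (this.mul_continuousOn hucont.continuousOn isCompact_Icc)
  -- assemble
  rw [intervalIntegral.integral_of_le hx, intervalIntegral.integral_of_le hx,
      intervalIntegral.integral_of_le hx]
  have hinner : ∫ t in Ioc (0:ℝ) x, (∫ s in (0:ℝ)..t, h s) * u' t
      = ∫ t in Ioc (0:ℝ) x, (∫ s in Ioc (0:ℝ) t, h s) * u' t := by
    refine setIntegral_congr_fun measurableSet_Ioc fun t ht => ?_
    rw [intervalIntegral.integral_of_le ht.1.le]
  rw [hinner, ← hL, swap, hR]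
  have hsub : ∫ s in Ioc (0:ℝ) x, h s * (u x - u s)
      = (∫ s in Ioc (0:ℝ) x, h s * u x) - ∫ s in Ioc (0:ℝ) x, h s * u s := by
    rw [← integral_sub (hh.mul_const _) hhu]
    exact setIntegral_congr_fun measurableSet_Ioc fun s _ => by ring
  rw [hsub, integral_mul_const]
  ring

lemma sol_est (ℓ : ℝ) (hℓ : 0 < ℓ) (f : ℝ → ℝ) (hf : IntegrableOn f (Ioc 0 ℓ))
    (E k : ℝ) (hk1 : 1 ≤ k) (hkE : k ^ 2 = E)
    (hkF : 4 * (∫ t in Ioc (0:ℝ) ℓ, |f t|) ≤ k)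
    (y y' : ℝ → ℝ) (hy : IsSolution ℓ E f y y') :
    |y ℓ - (y 0 * Real.cos (k * ℓ) + (y' 0 / k) * Real.sin (k * ℓ))|
      ≤ 4 * (|y 0| + |y' 0| / k) * (∫ t in Ioc (0:ℝ) ℓ, |f t|) / k ∧
    |y' ℓ - (-(y 0 * k) * Real.sin (k * ℓ) + y' 0 * Real.cos (k * ℓ))|
      ≤ 4 * (|y 0| + |y' 0| / k) * (∫ t in Ioc (0:ℝ) ℓ, |f t|) := by
  obtain ⟨hyd, hy'c, hy'eq⟩ := hy
  have hk0 : (0:ℝ) < k := lt_of_lt_of_le one_pos hk1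
  set F := ∫ t in Ioc (0:ℝ) ℓ, |f t| with hFdef
  have hF0 : 0 ≤ F := setIntegral_nonneg measurableSet_Ioc fun t _ => abs_nonneg _
  set c : ℝ → ℝ := fun t => Real.cos (k * t) with hcdef
  set s : ℝ → ℝ := fun t => Real.sin (k * t) with hsdef
  have hccont : Continuous c := Real.continuous_cos.comp (continuous_const.mul continuous_id)
  have hscont : Continuous s := Real.continuous_sin.comp (continuous_const.mul continuous_id)
  have hcder : ∀ t, HasDerivAt c (-(s t) * k) t := by
    intro t
    have := (Real.hasDerivAt_cos (k * t)).comp t ((hasDerivAt_id t).const_mul k)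
    simpa [hcdef, hsdef, mul_comm, Function.comp_def] using this
  have hsder : ∀ t, HasDerivAt s (c t * k) t := by
    intro t
    have := (Real.hasDerivAt_sin (k * t)).comp t ((hasDerivAt_id t).const_mul k)
    simpa [hcdef, hsdef, mul_comm, Function.comp_def] using this
  set h : ℝ → ℝ := fun t => (f t - E) * y t with hhdef
  have hyc : ContinuousOn y (Icc 0 ℓ) := fun t ht => (hyd t ht).continuousAt.continuousWithinAt
  set a : ℝ → ℝ := fun t => y t * c t - (y' t / k) * s t with hadef
  set b : ℝ → ℝ := fun t => y t * s t + (y' t / k) * c t with hbdef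
  have hsc1 : ∀ t : ℝ, s t ^ 2 + c t ^ 2 = 1 := fun t => Real.sin_sq_add_cos_sq (k * t)
  have hyab : ∀ t, y t = a t * c t + b t * s t := by
    intro t; simp only [hadef, hbdef]; linear_combination (-(y t)) * hsc1 t
  have hy'ab : ∀ t, y' t = k * (-(a t) * s t + b t * c t) := by
    intro t
    have hk' : k ≠ 0 := ne_of_gt hk0
    simp only [hadef, hbdef]
    field_simp
    linear_combination (-(y' t)) * hsc1 t
  have hsubIcc : ∀ x ∈ Icc (0:ℝ) ℓ, Icc (0:ℝ) x ⊆ Icc (0:ℝ) ℓ :=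
    fun x hx => Icc_subset_Icc_right hx.2
  have claim : ∀ x ∈ Icc (0:ℝ) ℓ,
      a x = a 0 - (1/k) * ∫ t in (0:ℝ)..x, f t * y t * s t ∧
      b x = b 0 + (1/k) * ∫ t in (0:ℝ)..x, f t * y t * c t := by
    intro x hx
    have hx0 : (0:ℝ) ≤ x := hx.1
    have huIcc : uIcc (0:ℝ) x = Icc (0:ℝ) x := uIcc_of_le hx0
    have hfx : IntegrableOn f (Ioc 0 x) := hf.mono_set (Ioc_subset_Ioc_right hx.2)
    have hfIcc : IntegrableOn f (Icc 0 x) := (integrableOn_Icc_iff_integrableOn_Ioc).mpr hfx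
    have hycx : ContinuousOn y (Icc 0 x) := hyc.mono (hsubIcc x hx)
    have hy'cx : ContinuousOn y' (Icc 0 x) := hy'c.mono (hsubIcc x hx)
    have hEconst : IntegrableOn (fun _ : ℝ => E) (Icc 0 x) :=
      integrableOn_const measure_Icc_lt_top.ne
    have hhIcc : IntegrableOn h (Icc 0 x) := by
      have : IntegrableOn (fun t => f t - E) (Icc 0 x) := hfIcc.sub hEconst
      exact this.mul_continuousOn hycx isCompact_Icc
    have hhx : IntegrableOn h (Ioc 0 x) := (integrableOn_Icc_iff_integrableOn_Ioc).mp hhIcc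
    have hII : ∀ g : ℝ → ℝ, ContinuousOn g (Icc 0 x) → IntervalIntegrable g volume 0 x := by
      intro g hg
      apply IntegrableOn.intervalIntegrable
      rw [huIcc]
      exact hg.integrableOn_compact isCompact_Icc
    have hIIh : ∀ g : ℝ → ℝ, ContinuousOn g (Icc 0 x) →
        IntervalIntegrable (fun t => h t * g t) volume 0 x := by
      intro g hg
      apply IntegrableOn.intervalIntegrable
      rw [huIcc]
      exact hhIcc.mul_continuousOn hg isCompact_Icc
    have memIcc : ∀ t ∈ uIcc (0:ℝ) x, t ∈ Icc (0:ℝ) ℓ := by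
      intro t ht
      exact hsubIcc x hx (huIcc ▸ ht)
    -- FTC for y * u
    have eq1c : y x * c x - y 0 * c 0
        = ∫ t in (0:ℝ)..x, (y' t * c t + y t * (-(s t) * k)) := by
      refine (intervalIntegral.integral_eq_sub_of_hasDerivAt
        (fun t ht => ((hyd t (memIcc t ht)).mul (hcder t))) ?_).symm
      exact hII _ ((hy'cx.mul hccont.continuousOn).add
        (hycx.mul ((hscont.neg.mul continuous_const).continuousOn)))
    have eq1s : y x * s x - y 0 * s 0
        = ∫ t in (0:ℝ)..x, (y' t * s t + y t * (c t * k)) := by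
      refine (intervalIntegral.integral_eq_sub_of_hasDerivAt
        (fun t ht => ((hyd t (memIcc t ht)).mul (hsder t))) ?_).symm
      exact hII _ ((hy'cx.mul hscont.continuousOn).add
        (hycx.mul ((hccont.mul continuous_const).continuousOn)))
    -- parts-based identity for y' * u
    have eq2 : ∀ u u' : ℝ → ℝ, (∀ t, HasDerivAt u (u' t) t) → Continuous u' →
        y' x * u x - y' 0 * u 0 = ∫ t in (0:ℝ)..x, (y' t * u' t + h t * u t) := by
      intro u u' hu hu'
      have hucont : Continuous u := continuous_iff_continuousAt.mpr fun t => (hu t).continuousAt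
      have hP := parts_aux h u u' x hx0 hhx hu hu'
      have hcongr : (∫ t in (0:ℝ)..x, (∫ s' in (0:ℝ)..t, h s') * u' t)
          = ∫ t in (0:ℝ)..x, (y' t * u' t - y' 0 * u' t) := by
        refine intervalIntegral.integral_congr fun t ht => ?_
        have := hy'eq t (memIcc t ht)
        have hInt : (∫ s' in (0:ℝ)..t, h s') = y' t - y' 0 := by linarith
        rw [hInt]; ring
      have int_y'u' : IntervalIntegrable (fun t => y' t * u' t) volume 0 x :=
        hII _ (hy'cx.mul hu'.continuousOn)
      have int_cu' : IntervalIntegrable (fun t => y' 0 * u' t) volume 0 x :=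
        (hu'.intervalIntegrable 0 x).const_mul _
      have int_hu : IntervalIntegrable (fun t => h t * u t) volume 0 x :=
        hIIh u hucont.continuousOn
      have hu'int : ∫ t in (0:ℝ)..x, u' t = u x - u 0 :=
        intervalIntegral.integral_eq_sub_of_hasDerivAt (fun t _ => hu t)
          (hu'.intervalIntegrable 0 x)
      have hy'x : y' x = y' 0 + ∫ t in (0:ℝ)..x, h t := hy'eq x hx
      have hsum := intervalIntegral.integral_add int_y'u' int_hu
      calc y' x * u x - y' 0 * u 0
          = (∫ t in (0:ℝ)..x, h t) * u x + y' 0 * (u x - u 0) := by rw [hy'x]; ring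
        _ = (∫ t in (0:ℝ)..x, (y' t * u' t - y' 0 * u' t))
              + (∫ t in (0:ℝ)..x, h t * u t) + y' 0 * ∫ t in (0:ℝ)..x, u' t := by
            rw [hP, hcongr, hu'int]
        _ = ((∫ t in (0:ℝ)..x, y' t * u' t) - ∫ t in (0:ℝ)..x, y' 0 * u' t)
              + (∫ t in (0:ℝ)..x, h t * u t) + y' 0 * ∫ t in (0:ℝ)..x, u' t := by
            rw [intervalIntegral.integral_sub int_y'u' int_cu']
        _ = ∫ t in (0:ℝ)..x, (y' t * u' t + h t * u t) := by
            rw [hsum, intervalIntegral.integral_const_mul]; ring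
    have eq2c := eq2 c (fun t => -(s t) * k) hcder ((hscont.neg.mul continuous_const))
    have eq2s := eq2 s (fun t => c t * k) hsder ((hccont.mul continuous_const))
    have intD1c : IntervalIntegrable (fun t => y' t * c t + y t * (-(s t) * k)) volume 0 x :=
      hII _ ((hy'cx.mul hccont.continuousOn).add
        (hycx.mul ((hscont.neg.mul continuous_const).continuousOn)))
    have intD1s : IntervalIntegrable (fun t => y' t * s t + y t * (c t * k)) volume 0 x :=
      hII _ ((hy'cx.mul hscont.continuousOn).add
        (hycx.mul ((hccont.mul continuous_const).continuousOn)))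
    have intD2c : IntervalIntegrable (fun t => y' t * (-(s t) * k) + h t * c t) volume 0 x :=
      (hII _ (hy'cx.mul ((hscont.neg.mul continuous_const).continuousOn))).add
        (hIIh c hccont.continuousOn)
    have intD2s : IntervalIntegrable (fun t => y' t * (c t * k) + h t * s t) volume 0 x :=
      (hII _ (hy'cx.mul ((hccont.mul continuous_const).continuousOn))).add
        (hIIh s hscont.continuousOn)
    have hk' : k ≠ 0 := ne_of_gt hk0
    constructor
    · have key : a x - a 0 = ∫ t in (0:ℝ)..x, (-(1/k)) * (f t * y t * s t) := by
        have eqa : a x - a 0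
            = (y x * c x - y 0 * c 0) - (1/k) * (y' x * s x - y' 0 * s 0) := by
          simp only [hadef]; ring
        rw [eqa, eq1c, eq2s, ← intervalIntegral.integral_const_mul,
            ← intervalIntegral.integral_sub intD1c (intD2s.const_mul (1/k))]
        refine intervalIntegral.integral_congr fun t ht => ?_
        simp only [hhdef]
        rw [← hkE]
        field_simp
        ring
      rw [intervalIntegral.integral_const_mul] at key
      linarith [key]
    · have key : b x - b 0 = ∫ t in (0:ℝ)..x, ((1/k)) * (f t * y t * c t) := by
        have eqb : b x - b 0
            = (y x * s x - y 0 * s 0) + (1/k) * (y' x * c x - y' 0 * c 0) := by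
          simp only [hbdef]; ring
        rw [eqb, eq1s, eq2c, ← intervalIntegral.integral_const_mul,
            ← intervalIntegral.integral_add intD1s (intD2c.const_mul (1/k))]
        refine intervalIntegral.integral_congr fun t ht => ?_
        simp only [hhdef]
        rw [← hkE]
        field_simp
        ring
      rw [intervalIntegral.integral_const_mul] at key
      linarith [key]
  -- continuity of a, b
  have hc1 : ∀ t, |c t| ≤ 1 := fun t => by simp only [hcdef]; exact Real.abs_cos_le_one _
  have hs1 : ∀ t, |s t| ≤ 1 := fun t => by simp only [hsdef]; exact Real.abs_sin_le_one _
  have hacont : ContinuousOn a (Icc 0 ℓ) :=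
    (hyc.mul hccont.continuousOn).sub ((hy'c.div_const k).mul hscont.continuousOn)
  have hbcont : ContinuousOn b (Icc 0 ℓ) :=
    (hyc.mul hscont.continuousOn).add ((hy'c.div_const k).mul hccont.continuousOn)
  obtain ⟨t₁, ht₁, hmax⟩ := isCompact_Icc.exists_isMaxOn (nonempty_Icc.mpr hℓ.le)
    (hacont.abs.add hbcont.abs)
  obtain ⟨M, hM0, hMub, t₀, ht₀, hMeq⟩ :
      ∃ M : ℝ, 0 ≤ M ∧ (∀ x ∈ Icc (0:ℝ) ℓ, |a x| + |b x| ≤ M) ∧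
        ∃ t₀ ∈ Icc (0:ℝ) ℓ, |a t₀| + |b t₀| = M :=
    ⟨|a t₁| + |b t₁|, add_nonneg (abs_nonneg _) (abs_nonneg _),
      fun x hx => hmax hx, t₁, ht₁, rfl⟩
  have hyM : ∀ t ∈ Icc (0:ℝ) ℓ, |y t| ≤ M := by
    intro t ht
    have h1 : |y t| = |a t * c t + b t * s t| := by rw [← hyab t]
    have h2 : |a t * c t + b t * s t| ≤ |a t| + |b t| := by
      calc |a t * c t + b t * s t| ≤ |a t * c t| + |b t * s t| := abs_add_le _ _
        _ ≤ |a t| + |b t| := by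
          rw [abs_mul, abs_mul]
          nlinarith [abs_nonneg (a t), abs_nonneg (b t), hc1 t, hs1 t,
            abs_nonneg (c t), abs_nonneg (s t)]
    exact (h1 ▸ h2).trans (hMub t ht)
  -- integral bound
  have hIb : ∀ x ∈ Icc (0:ℝ) ℓ, ∀ g : ℝ → ℝ, Continuous g → (∀ t, |g t| ≤ 1) →
      |∫ t in (0:ℝ)..x, f t * y t * g t| ≤ M * F := by
    intro x hx g hgc hg1
    have hx0 : (0:ℝ) ≤ x := hx.1
    have hfx : IntegrableOn f (Ioc 0 x) := hf.mono_set (Ioc_subset_Ioc_right hx.2)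
    have hfyg : IntegrableOn (fun t => f t * y t * g t) (Ioc 0 x) := by
      have hfIcc : IntegrableOn f (Icc 0 x) := (integrableOn_Icc_iff_integrableOn_Ioc).mpr hfx
      have h2 : IntegrableOn (fun t => f t * (y t * g t)) (Icc 0 x) :=
        hfIcc.mul_continuousOn ((hyc.mono (Icc_subset_Icc_right hx.2)).mul hgc.continuousOn)
          isCompact_Icc
      have h3 := (integrableOn_Icc_iff_integrableOn_Ioc).mp h2
      simpa [mul_assoc] using h3
    calc |∫ t in (0:ℝ)..x, f t * y t * g t| ≤ ∫ t in (0:ℝ)..x, |f t * y t * g t| :=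
        intervalIntegral.abs_integral_le_integral_abs hx0
      _ = ∫ t in Ioc (0:ℝ) x, |f t * y t * g t| := by
          rw [intervalIntegral.integral_of_le hx0]
      _ ≤ ∫ t in Ioc (0:ℝ) x, |f t| * M := by
          refine setIntegral_mono_on hfyg.abs (hfx.abs.mul_const M) measurableSet_Ioc ?_
          intro t ht
          have htIcc : t ∈ Icc (0:ℝ) ℓ := ⟨ht.1.le, ht.2.trans hx.2⟩
          rw [abs_mul, abs_mul]
          calc |f t| * |y t| * |g t| ≤ |f t| * |y t| * 1 :=
                mul_le_mul_of_nonneg_left (hg1 t) (mul_nonneg (abs_nonneg _) (abs_nonneg _))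
            _ = |f t| * |y t| := by ring
            _ ≤ |f t| * M := mul_le_mul_of_nonneg_left (hyM t htIcc) (abs_nonneg _)
      _ ≤ ∫ t in Ioc (0:ℝ) ℓ, |f t| * M := by
          refine setIntegral_mono_set (hf.abs.mul_const M) ?_ ?_
          · exact Filter.Eventually.of_forall fun t => mul_nonneg (abs_nonneg _) hM0
          · exact HasSubset.Subset.eventuallyLE (Ioc_subset_Ioc_right hx.2)
      _ = M * F := by rw [integral_mul_const, hFdef, mul_comm]
  -- deviation bounds
  have hdev : ∀ x ∈ Icc (0:ℝ) ℓ, |a x - a 0| ≤ M * F / k ∧ |b x - b 0| ≤ M * F / k := by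
    intro x hx
    obtain ⟨hax, hbx⟩ := claim x hx
    have hk1' : (0:ℝ) < 1/k := by positivity
    constructor
    · have h1 : a x - a 0 = -((1/k) * ∫ t in (0:ℝ)..x, f t * y t * s t) := by
        rw [hax]; ring
      rw [h1, abs_neg, abs_mul, abs_of_pos hk1']
      have := hIb x hx s hscont hs1
      calc (1/k) * |∫ t in (0:ℝ)..x, f t * y t * s t| ≤ (1/k) * (M * F) :=
            mul_le_mul_of_nonneg_left this hk1'.le
        _ = M * F / k := by ring
    · have h1 : b x - b 0 = (1/k) * ∫ t in (0:ℝ)..x, f t * y t * c t := by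
        rw [hbx]; ring
      rw [h1, abs_mul, abs_of_pos hk1']
      have := hIb x hx c hccont hc1
      calc (1/k) * |∫ t in (0:ℝ)..x, f t * y t * c t| ≤ (1/k) * (M * F) :=
            mul_le_mul_of_nonneg_left this hk1'.le
        _ = M * F / k := by ring
  -- gronwall-free bound
  have hFk : F / k ≤ 1/4 := by rw [div_le_iff₀ hk0]; linarith
  have ha0 : a 0 = y 0 := by simp [hadef, hcdef, hsdef]
  have hb0 : b 0 = y' 0 / k := by simp [hbdef, hcdef, hsdef]
  have hm0abs : |a 0| + |b 0| = |y 0| + |y' 0| / k := by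
    rw [ha0, hb0, abs_div, abs_of_pos hk0]
  have hM2 : M ≤ 2 * (|y 0| + |y' 0| / k) := by
    obtain ⟨h1, h2⟩ := hdev t₀ ht₀
    have h3 : |a t₀| + |b t₀| ≤ |a 0| + |b 0| + |a t₀ - a 0| + |b t₀ - b 0| := by
      have g1 := abs_sub_abs_le_abs_sub (a t₀) (a 0)
      have g2 := abs_sub_abs_le_abs_sub (b t₀) (b 0)
      linarith
    have h4 : M * F / k ≤ M / 4 := by
      have h5 : M * (F/k) ≤ M * (1/4) := mul_le_mul_of_nonneg_left hFk hM0
      calc M * F / k = M * (F/k) := by ring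
        _ ≤ M * (1/4) := h5
        _ = M / 4 := by ring
    rw [← hm0abs]
    linarith [hMeq]
  set m0 : ℝ := |y 0| + |y' 0| / k with hm0def
  have hm00 : (0:ℝ) ≤ m0 := add_nonneg (abs_nonneg _) (div_nonneg (abs_nonneg _) hk0.le)
  obtain ⟨haℓ, hbℓ⟩ := hdev ℓ (right_mem_Icc.mpr hℓ.le)
  have hMFk : M * F / k ≤ 2 * m0 * F / k := by
    have h1 : M * F ≤ 2 * m0 * F := mul_le_mul_of_nonneg_right hM2 hF0
    gcongr
  constructor
  · -- bound on y ℓ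
    have e1 : y ℓ - (y 0 * c ℓ + (y' 0 / k) * s ℓ)
        = (a ℓ - a 0) * c ℓ + (b ℓ - b 0) * s ℓ := by
      rw [hyab ℓ]
      rw [← ha0, ← hb0]
      ring
    rw [e1]
    have h1 : |(a ℓ - a 0) * c ℓ + (b ℓ - b 0) * s ℓ| ≤ |a ℓ - a 0| + |b ℓ - b 0| := by
      calc |(a ℓ - a 0) * c ℓ + (b ℓ - b 0) * s ℓ|
          ≤ |(a ℓ - a 0) * c ℓ| + |(b ℓ - b 0) * s ℓ| := abs_add_le _ _
        _ ≤ |a ℓ - a 0| + |b ℓ - b 0| := by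
            rw [abs_mul, abs_mul]
            nlinarith [abs_nonneg (a ℓ - a 0), abs_nonneg (b ℓ - b 0), hc1 ℓ, hs1 ℓ,
              abs_nonneg (c ℓ), abs_nonneg (s ℓ)]
    have h2 : |a ℓ - a 0| + |b ℓ - b 0| ≤ 2 * (M * F / k) := by linarith
    have h3 : 2 * (M * F / k) ≤ 2 * (2 * m0 * F / k) := by linarith
    have h4 : 2 * (2 * m0 * F / k) = 4 * m0 * F / k := by ring
    rw [hm0def] at h4
    linarith
  · -- bound on y' ℓ
    have e2 : y' ℓ - (-(y 0 * k) * s ℓ + y' 0 * c ℓ)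
        = k * ((a 0 - a ℓ) * s ℓ + (b ℓ - b 0) * c ℓ) := by
      have h1 := hy'ab ℓ
      have h3 : b 0 * k = y' 0 := by
        rw [hb0]; field_simp
      linear_combination h1 - (k * s ℓ) * ha0 + (c ℓ) * h3
    rw [e2]
    have h1 : |(a 0 - a ℓ) * s ℓ + (b ℓ - b 0) * c ℓ| ≤ |a ℓ - a 0| + |b ℓ - b 0| := by
      calc |(a 0 - a ℓ) * s ℓ + (b ℓ - b 0) * c ℓ|
          ≤ |(a 0 - a ℓ) * s ℓ| + |(b ℓ - b 0) * c ℓ| := abs_add_le _ _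
        _ ≤ |a ℓ - a 0| + |b ℓ - b 0| := by
            rw [abs_mul, abs_mul, abs_sub_comm (a 0) (a ℓ)]
            nlinarith [abs_nonneg (a ℓ - a 0), abs_nonneg (b ℓ - b 0), hc1 ℓ, hs1 ℓ,
              abs_nonneg (c ℓ), abs_nonneg (s ℓ)]
    rw [abs_mul, abs_of_pos hk0]
    have h2 : |a ℓ - a 0| + |b ℓ - b 0| ≤ 2 * (M * F / k) := by linarith
    have h3 : k * |(a 0 - a ℓ) * s ℓ + (b ℓ - b 0) * c ℓ| ≤ k * (2 * (M * F / k)) :=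
      mul_le_mul_of_nonneg_left (h1.trans h2) hk0.le
    have h4 : k * (2 * (M * F / k)) = 2 * (M * F) := by field_simp
    have h5 : 2 * (M * F) ≤ 2 * (2 * m0 * F) := by nlinarith
    have h6 : 2 * (2 * m0 * F) = 4 * m0 * F := by ring
    rw [hm0def] at h6
    linarith

lemma halfTrace_est (ℓ : ℝ) (hℓ : 0 < ℓ) (f : ℝ → ℝ) (hf : IntegrableOn f (Ioc 0 ℓ))
    (E k v : ℝ) (hk1 : 1 ≤ k) (hkE : k ^ 2 = E)
    (hkF : 4 * (∫ t in Ioc (0:ℝ) ℓ, |f t|) ≤ k)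
    (hv : IsHalfTrace ℓ f E v) :
    |v - Real.cos (k * ℓ)| ≤ 4 * (∫ t in Ioc (0:ℝ) ℓ, |f t|) / k := by
  obtain ⟨yN, yN', yD, yD', ⟨hNsol, hN0, hN0'⟩, ⟨hDsol, hD0, hD0'⟩, hveq⟩ := hv
  have hk0 : (0:ℝ) < k := lt_of_lt_of_le one_pos hk1
  set F := ∫ t in Ioc (0:ℝ) ℓ, |f t| with hF
  have hN := (sol_est ℓ hℓ f hf E k hk1 hkE hkF yN yN' hNsol).1
  have hD := (sol_est ℓ hℓ f hf E k hk1 hkE hkF yD yD' hDsol).2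
  rw [hN0, hN0'] at hN
  rw [hD0, hD0'] at hD
  norm_num at hN hD
  have hD' : |yD' ℓ - Real.cos (k * ℓ)| ≤ 4 * F / k := by
    have h1 : 4 * k⁻¹ * (∫ t in Ioc (0:ℝ) ℓ, |f t|) = 4 * (∫ t in Ioc (0:ℝ) ℓ, |f t|) / k := by
      ring
    rw [hF, ← h1]
    exact hD
  have hN' : |yN ℓ - Real.cos (k * ℓ)| ≤ 4 * F / k := by
    rw [hF]
    exact hN
  have key : v - Real.cos (k * ℓ)
      = ((yN ℓ - Real.cos (k * ℓ)) + (yD' ℓ - Real.cos (k * ℓ))) / 2 := by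
    rw [hveq]; ring
  rw [key]
  have h2 := abs_add_le (yN ℓ - Real.cos (k * ℓ)) (yD' ℓ - Real.cos (k * ℓ))
  rw [abs_div, abs_two]
  linarith [hN', hD']

lemma sqrt_tendsto_atTop : Tendsto Real.sqrt atTop atTop := by
  refine tendsto_atTop_atTop.mpr fun b => ⟨(max b 0)^2, fun a ha => ?_⟩
  have h1 : max b 0 ≤ Real.sqrt a := by
    have h2 : Real.sqrt ((max b 0)^2) ≤ Real.sqrt a := Real.sqrt_le_sqrt ha
    rwa [Real.sqrt_sq (le_max_right b 0)] at h2
  exact le_trans (le_max_left b 0) h1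

lemma halfTrace_tendsto (ℓ : ℝ) (hℓ : 0 < ℓ) (f : ℝ → ℝ) (hf : IntegrableOn f (Ioc 0 ℓ))
    (xf : ℝ → ℝ) (hx : ∀ E, IsHalfTrace ℓ f E (xf E)) :
    Tendsto (fun E => xf E - Real.cos (Real.sqrt E * ℓ)) atTop (nhds 0) := by
  set F := ∫ t in Ioc (0:ℝ) ℓ, |f t| with hF
  have hF0 : 0 ≤ F := setIntegral_nonneg measurableSet_Ioc fun t _ => abs_nonneg _
  have hg : Tendsto (fun E => 4 * F / Real.sqrt E) atTop (nhds 0) := by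
    have h1 : Tendsto (fun E : ℝ => (Real.sqrt E)⁻¹) atTop (nhds 0) :=
      sqrt_tendsto_atTop.inv_tendsto_atTop
    have h2 := h1.const_mul (4 * F)
    simpa [div_eq_mul_inv] using h2
  refine squeeze_zero_norm' ?_ hg
  have hev : ∀ᶠ E in atTop, (max 1 (4*F))^2 ≤ E := eventually_ge_atTop _
  refine hev.mono fun E hE => ?_
  have hE0 : (0:ℝ) ≤ E := le_trans (by positivity) hE
  have hkmax : max 1 (4*F) ≤ Real.sqrt E := by
    have h2 : Real.sqrt ((max 1 (4*F))^2) ≤ Real.sqrt E := Real.sqrt_le_sqrt hE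
    rwa [Real.sqrt_sq (le_max_of_le_left zero_le_one)] at h2
  have hk1 : 1 ≤ Real.sqrt E := le_trans (le_max_left _ _) hkmax
  have hkF : 4*F ≤ Real.sqrt E := le_trans (le_max_right _ _) hkmax
  have hkE : (Real.sqrt E)^2 = E := Real.sq_sqrt hE0
  have := halfTrace_est ℓ hℓ f hf E (Real.sqrt E) (xf E) hk1 hkE hkF (hx E)
  rw [Real.norm_eq_abs]
  exact this

lemma FVzero (u v : ℝ) : FV (Real.cos (u + v)) (Real.cos u) (Real.cos v) = 0 := by
  simp only [FV, Real.cos_add]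
  nlinarith [Real.sin_sq_add_cos_sq u, Real.sin_sq_add_cos_sq v]

lemma FV_diff (x y z x' y' z' : ℝ) (hx : |x| ≤ 2) (hy : |y| ≤ 2) (hz : |z| ≤ 2)
    (hx' : |x'| ≤ 2) (hy' : |y'| ≤ 2) (hz' : |z'| ≤ 2) :
    |FV x y z - FV x' y' z'| ≤ 12 * |x - x'| + 12 * |y - y'| + 12 * |z - z'| := by
  have habs : ∀ u v w1 w2 : ℝ, |u| ≤ 2 → |v| ≤ 2 → |w1| ≤ 2 → |w2| ≤ 2 →
      |u + v - 2*w1*w2| ≤ 12 := by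
    intro u v w1 w2 hu hv h1 h2
    have h3 : |2*w1*w2| ≤ 8 := by
      rw [abs_mul, abs_mul, abs_two]
      nlinarith [abs_nonneg w1, abs_nonneg w2]
    calc |u + v - 2*w1*w2| = |u + v + (-(2*w1*w2))| := by ring_nf
      _ ≤ |u| + |v| + |-(2*w1*w2)| := abs_add_three _ _ _
      _ ≤ 12 := by rw [abs_neg]; linarith
  have key : FV x y z - FV x' y' z'
      = (x - x') * (x + x' - 2*y*z) + (y - y') * (y + y' - 2*x'*z)
        + (z - z') * (z + z' - 2*x'*y') := by
    simp only [FV]; ring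
  rw [key]
  have c1 := habs x x' y z hx hx' hy hz
  have c2 := habs y y' x' z hy hy' hx' hz
  have c3 := habs z z' x' y' hz hz' hx' hy'
  have hA : |(x - x') * (x + x' - 2*y*z)| ≤ 12 * |x - x'| := by
    rw [abs_mul]; nlinarith [abs_nonneg (x - x')]
  have hB : |(y - y') * (y + y' - 2*x'*z)| ≤ 12 * |y - y'| := by
    rw [abs_mul]; nlinarith [abs_nonneg (y - y')]
  have hC : |(z - z') * (z + z' - 2*x'*y')| ≤ 12 * |z - z'| := by
    rw [abs_mul]; nlinarith [abs_nonneg (z - z')]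
  calc |(x - x') * (x + x' - 2*y*z) + (y - y') * (y + y' - 2*x'*z)
        + (z - z') * (z + z' - 2*x'*y')|
      ≤ |(x - x') * (x + x' - 2*y*z)| + |(y - y') * (y + y' - 2*x'*z)|
        + |(z - z') * (z + z' - 2*x'*y')| := abs_add_three _ _ _
    _ ≤ 12 * |x - x'| + 12 * |y - y'| + 12 * |z - z'| := by linarith

lemma memLp_integrableOn (ℓ : ℝ) (f : ℝ → ℝ)
    (hf : MeasureTheory.MemLp f 2 (MeasureTheory.volume.restrict (Set.Ioc 0 ℓ))) :
    IntegrableOn f (Ioc 0 ℓ) := by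
  haveI : IsFiniteMeasure (volume.restrict (Ioc (0:ℝ) ℓ)) :=
    ⟨by rw [Measure.restrict_apply_univ]; exact measure_Ioc_lt_top⟩
  have h1 : MeasureTheory.MemLp f 1 (volume.restrict (Ioc (0:ℝ) ℓ)) :=
    hf.mono_exponent (by norm_num)
  exact memLp_one_iff_integrable.mp h1

lemma concat_integrableOn (ℓa ℓb : ℝ) (hℓa : 0 < ℓa) (hℓb : 0 < ℓb) (fa fb : ℝ → ℝ)
    (ha : IntegrableOn fa (Ioc 0 ℓa)) (hb : IntegrableOn fb (Ioc 0 ℓb)) :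
    IntegrableOn (concatPair ℓa fa fb) (Ioc 0 (ℓa + ℓb)) := by
  have hsplit : Ioc (0:ℝ) (ℓa + ℓb) = Ioc 0 ℓa ∪ Ioc ℓa (ℓa + ℓb) :=
    (Ioc_union_Ioc_eq_Ioc hℓa.le (by linarith)).symm
  rw [hsplit]
  refine integrableOn_union.mpr ⟨?_, ?_⟩
  · -- first piece, equal to fa a.e.
    refine ha.congr_fun_ae ?_
    have h1 : ∀ᵐ x ∂(volume : Measure ℝ), x ≠ ℓa := by
      rw [ae_iff]
      have hset : {x : ℝ | ¬ x ≠ ℓa} = {ℓa} := by ext x; simp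
      rw [hset, Real.volume_singleton]
    filter_upwards [ae_restrict_of_ae h1, ae_restrict_mem measurableSet_Ioc] with x hx hxm
    have : x < ℓa := lt_of_le_of_ne hxm.2 hx
    simp [concatPair, this]
  · -- second piece, equal to translated fb
    have h2 : IntervalIntegrable fb volume 0 ℓb :=
      (intervalIntegrable_iff_integrableOn_Ioc_of_le hℓb.le).mpr hb
    have h3 := h2.comp_sub_right ℓa
    simp only [zero_add] at h3
    have h4 : IntegrableOn (fun x => fb (x - ℓa)) (Ioc ℓa (ℓb + ℓa)) :=
      (intervalIntegrable_iff_integrableOn_Ioc_of_le (by linarith)).mp h3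
    have h5 : IntegrableOn (fun x => fb (x - ℓa)) (Ioc ℓa (ℓa + ℓb)) := by
      rwa [add_comm ℓb ℓa] at h4
    refine h5.congr_fun ?_ measurableSet_Ioc
    intro x hx
    have : ¬ x < ℓa := not_lt.mpr hx.1.le
    simp [concatPair, this]


/-- the Fricke–Vogt invariant along the curve of initial conditions tends
to zero at high energy: `I(E) → 0` as `E → ∞`. -/
theorem frickeVogt_tendsto_zero_high_energy
    (ℓa ℓb : ℝ) (hℓa : 0 < ℓa) (hℓb : 0 < ℓb) (fa fb : ℝ → ℝ)
    (hfa : MeasureTheory.MemLp fa 2 (MeasureTheory.volume.restrict (Set.Ioc 0 ℓa)))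
    (hfb : MeasureTheory.MemLp fb 2 (MeasureTheory.volume.restrict (Set.Ioc 0 ℓb)))
    (xa xb xab : ℝ → ℝ)
    (hxa : ∀ E : ℝ, IsHalfTrace ℓa fa E (xa E))
    (hxb : ∀ E : ℝ, IsHalfTrace ℓb fb E (xb E))
    (hxab : ∀ E : ℝ, IsHalfTrace (ℓa + ℓb) (concatPair ℓa fa fb) E (xab E)) :
    Filter.Tendsto (fun E => FV (xab E) (xa E) (xb E)) Filter.atTop (nhds 0) := by
  have hfa1 : IntegrableOn fa (Ioc 0 ℓa) := memLp_integrableOn ℓa fa hfa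
  have hfb1 : IntegrableOn fb (Ioc 0 ℓb) := memLp_integrableOn ℓb fb hfb
  have hfab1 : IntegrableOn (concatPair ℓa fa fb) (Ioc 0 (ℓa + ℓb)) :=
    concat_integrableOn ℓa ℓb hℓa hℓb fa fb hfa1 hfb1
  have hℓab : 0 < ℓa + ℓb := by linarith
  set ca : ℝ → ℝ := fun E => Real.cos (Real.sqrt E * ℓa) with hca
  set cb : ℝ → ℝ := fun E => Real.cos (Real.sqrt E * ℓb) with hcb
  set cab : ℝ → ℝ := fun E => Real.cos (Real.sqrt E * (ℓa + ℓb)) with hcab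
  have hta : Tendsto (fun E => xa E - ca E) atTop (nhds 0) :=
    halfTrace_tendsto ℓa hℓa fa hfa1 xa hxa
  have htb : Tendsto (fun E => xb E - cb E) atTop (nhds 0) :=
    halfTrace_tendsto ℓb hℓb fb hfb1 xb hxb
  have htab : Tendsto (fun E => xab E - cab E) atTop (nhds 0) :=
    halfTrace_tendsto (ℓa + ℓb) hℓab (concatPair ℓa fa fb) hfab1 xab hxab
  -- FV of the cosine point vanishes
  have hFV0 : ∀ E : ℝ, FV (cab E) (ca E) (cb E) = 0 := by
    intro E
    have h1 : Real.sqrt E * (ℓa + ℓb) = Real.sqrt E * ℓa + Real.sqrt E * ℓb := by ring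
    simp only [hca, hcb, hcab, h1]
    exact FVzero (Real.sqrt E * ℓa) (Real.sqrt E * ℓb)
  -- squeeze
  have hbound : Tendsto
      (fun E => 12 * |xab E - cab E| + 12 * |xa E - ca E| + 12 * |xb E - cb E|)
      atTop (nhds 0) := by
    have h1 : Tendsto (fun E => |xab E - cab E|) atTop (nhds 0) := by
      simpa using htab.abs
    have h2 : Tendsto (fun E => |xa E - ca E|) atTop (nhds 0) := by
      simpa using hta.abs
    have h3 : Tendsto (fun E => |xb E - cb E|) atTop (nhds 0) := by
      simpa using htb.abs
    have := ((h1.const_mul (12:ℝ)).add (h2.const_mul (12:ℝ))).add (h3.const_mul (12:ℝ))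
    simpa using this
  refine squeeze_zero_norm' ?_ hbound
  have hev1 : ∀ᶠ E in atTop, |xab E - cab E| < 1 := by
    have := NormedAddCommGroup.tendsto_nhds_zero.mp htab 1 one_pos
    simpa [Real.norm_eq_abs] using this
  have hev2 : ∀ᶠ E in atTop, |xa E - ca E| < 1 := by
    have := NormedAddCommGroup.tendsto_nhds_zero.mp hta 1 one_pos
    simpa [Real.norm_eq_abs] using this
  have hev3 : ∀ᶠ E in atTop, |xb E - cb E| < 1 := by
    have := NormedAddCommGroup.tendsto_nhds_zero.mp htb 1 one_pos
    simpa [Real.norm_eq_abs] using this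
  filter_upwards [hev1, hev2, hev3] with E h1 h2 h3
  have hcab1 : |cab E| ≤ 1 := Real.abs_cos_le_one _
  have hca1 : |ca E| ≤ 1 := Real.abs_cos_le_one _
  have hcb1 : |cb E| ≤ 1 := Real.abs_cos_le_one _
  have hxab2 : |xab E| ≤ 2 := by
    have := abs_sub_abs_le_abs_sub (xab E) (cab E); linarith
  have hxa2 : |xa E| ≤ 2 := by
    have := abs_sub_abs_le_abs_sub (xa E) (ca E); linarith
  have hxb2 : |xb E| ≤ 2 := by
    have := abs_sub_abs_le_abs_sub (xb E) (cb E); linarith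
  have hd := FV_diff (xab E) (xa E) (xb E) (cab E) (ca E) (cb E)
    hxab2 hxa2 hxb2 (by linarith) (by linarith) (by linarith)
  rw [hFV0 E, sub_zero] at hd
  rw [Real.norm_eq_abs]
  exact hd
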